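/- Let $p > q \geq 1$ with $\gcd(p,q) = 1$. Then $\frac{(p+q-2)!}{p!\,q!} + \frac{1}{p+q-1}\left(\sum_{1 < d \mid \gcd(p-1,q)} \varphi(d)\binom{(p+q-1)/d}{q/d} + \sum_{1 < d \mid \gcd(p,q-1)} \varphi(d)\binom{(p+q-1)/d}{p/d}\right)$ is a positive integer. -/

import Mathlib

open Finset Pointwise

variable {n : ℕ} [NeZero n]

/-- The action of `ZMod n` on finsets of `ZMod n` of fixed cardinality. -/
instance neckAction (q : ℕ) : AddAction (ZMod n) {s : Finset (ZMod n) // s.card = q} where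
  vadd g s := ⟨g +ᵥ s.1, by rw [Finset.card_vadd_finset]; exact s.2⟩
  zero_vadd s := Subtype.ext (zero_vadd _ s.1)
  add_vadd a b s := Subtype.ext (add_vadd a b s.1)

lemma neck_vadd_def (q : ℕ) (g : ZMod n) (s : {s : Finset (ZMod n) // s.card = q}) :
    (g +ᵥ s).1 = g +ᵥ s.1 := rfl

section fix
variable (g : ZMod n)

local notation "H" => AddSubgroup.zmultiples g
local notation "Q" => ZMod n ⧸ AddSubgroup.zmultiples g

noncomputable instance : Fintype Q := Fintype.ofFinite _

lemma fiber_card (c : Q) :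
    (Finset.univ.filter fun x : ZMod n => (QuotientAddGroup.mk x : Q) = c).card = addOrderOf g := by
  classical
  rw [← Fintype.card_subtype]
  have e1 : {x : ZMod n // (QuotientAddGroup.mk x : Q) = c} ≃
      ((QuotientAddGroup.mk : ZMod n → Q) ⁻¹' {c}) :=
    Equiv.subtypeEquivProp (by ext x; simp)
  have e2 := QuotientAddGroup.preimageMkEquivAddSubgroupProdSet (AddSubgroup.zmultiples g) {c}
  rw [Fintype.card_congr (e1.trans e2)]
  have : Nat.card H = addOrderOf g := Nat.card_zmultiples g
  simp [Fintype.card_prod, ← Nat.card_eq_fintype_card, this]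

lemma card_quot : Fintype.card Q = n / addOrderOf g := by
  have h1 : Nat.card (ZMod n) = Nat.card Q * Nat.card H :=
    AddSubgroup.card_eq_card_quotient_mul_card_addSubgroup _
  have h2 : Nat.card H = addOrderOf g := Nat.card_zmultiples g
  have h3 : Nat.card (ZMod n) = n := by simp [Nat.card_eq_fintype_card, ZMod.card]
  have h4 : 0 < addOrderOf g := addOrderOf_pos g
  rw [← Nat.card_eq_fintype_card]
  rw [h2, h3] at h1
  exact (Nat.div_eq_of_eq_mul_left h4 h1).symm
end fix

section lift
variable (g : ZMod n)
local notation "H" => AddSubgroup.zmultiples g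
local notation "Q" => ZMod n ⧸ AddSubgroup.zmultiples g

/-- lift of a finset of the quotient -/
noncomputable def liftF (t : Finset Q) : Finset (ZMod n) :=
  Finset.univ.filter fun x : ZMod n => (QuotientAddGroup.mk x : Q) ∈ t

lemma mem_liftF {t : Finset Q} {x : ZMod n} :
    x ∈ liftF g t ↔ (QuotientAddGroup.mk x : Q) ∈ t := by
  simp [liftF]

lemma card_liftF (t : Finset Q) : (liftF g t).card = t.card * addOrderOf g := by
  classical
  rw [Finset.card_eq_sum_card_fiberwise
    (f := fun x : ZMod n => (QuotientAddGroup.mk x : Q)) (t := t)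
    (fun x hx => (mem_liftF g).1 hx)]
  have : ∀ c ∈ t, ((liftF g t).filter fun x => (QuotientAddGroup.mk x : Q) = c).card
      = addOrderOf g := by
    intro c hc
    rw [← fiber_card g c]
    congr 1
    ext x
    simp only [Finset.mem_filter, mem_liftF, Finset.mem_univ, true_and]
    constructor
    · rintro ⟨_, h⟩; exact h
    · rintro h; exact ⟨h ▸ hc, h⟩
  rw [Finset.sum_congr rfl this]
  simp [mul_comm]

lemma liftF_fixed (t : Finset Q) : g +ᵥ liftF g t = liftF g t := by
  apply Finset.eq_of_subset_of_card_le
  · intro x hx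
    rw [Finset.mem_vadd_finset] at hx
    obtain ⟨y, hy, rfl⟩ := hx
    rw [mem_liftF] at hy ⊢
    have : (QuotientAddGroup.mk (g +ᵥ y) : Q) = QuotientAddGroup.mk y := by
      have hg : (QuotientAddGroup.mk g : Q) = 0 :=
        (QuotientAddGroup.eq_zero_iff g).2 (AddSubgroup.mem_zmultiples g)
      show (QuotientAddGroup.mk (g + y) : Q) = _
      rw [QuotientAddGroup.mk_add, hg, zero_add]
    rwa [this]
  · rw [Finset.card_vadd_finset]

lemma fixed_eq_liftF (s : Finset (ZMod n)) (hs : g +ᵥ s = s) :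
    s = liftF g (s.image (QuotientAddGroup.mk : ZMod n → Q)) := by
  classical
  have hstab : ∀ h ∈ H, h +ᵥ s = s := by
    have : H ≤ AddAction.stabilizer (ZMod n) s := by
      rw [AddSubgroup.zmultiples_le]
      exact hs
    intro h hh
    exact this hh
  ext x
  rw [mem_liftF, Finset.mem_image]
  constructor
  · intro hx; exact ⟨x, hx, rfl⟩
  · rintro ⟨y, hy, hxy⟩
    have : -x + y ∈ H := (QuotientAddGroup.eq (s := H)).1 hxy.symm
    have h2 : x - y ∈ H := by
      have h' := AddSubgroup.neg_mem _ this
      have : -(-x + y) = x - y := by abel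
      rwa [this] at h'
    have h3 := hstab _ h2
    have : (x - y) +ᵥ y ∈ (x - y) +ᵥ s := Finset.vadd_mem_vadd_finset hy
    rw [h3] at this
    simpa [vadd_eq_add, sub_add_cancel] using this
end lift

section cardfix
variable (q : ℕ) (g : ZMod n)
local notation "Q" => ZMod n ⧸ AddSubgroup.zmultiples g

noncomputable def fixEquiv :
    (AddAction.fixedBy {s : Finset (ZMod n) // s.card = q} g) ≃
      {t : Finset Q // t.card * addOrderOf g = q} where
  toFun σ := ⟨σ.1.1.image (QuotientAddGroup.mk : ZMod n → Q), by
    have hfix : g +ᵥ σ.1.1 = σ.1.1 := by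
      have := σ.2
      rw [AddAction.mem_fixedBy] at this
      exact congrArg Subtype.val this
    have h1 := fixed_eq_liftF g σ.1.1 hfix
    have h2 := card_liftF g (σ.1.1.image (QuotientAddGroup.mk : ZMod n → Q))
    rw [← h1] at h2
    rw [← h2, σ.1.2]⟩
  invFun t := ⟨⟨liftF g t.1, by rw [card_liftF]; exact t.2⟩,
    AddAction.mem_fixedBy.mpr (Subtype.ext (liftF_fixed g t.1))⟩
  left_inv σ := by
    apply Subtype.ext; apply Subtype.ext
    have hfix : g +ᵥ σ.1.1 = σ.1.1 := by
      have := σ.2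
      rw [AddAction.mem_fixedBy] at this
      exact congrArg Subtype.val this
    exact (fixed_eq_liftF g σ.1.1 hfix).symm
  right_inv t := by
    apply Subtype.ext
    ext c
    simp only [Finset.mem_image]
    constructor
    · rintro ⟨x, hx, rfl⟩; exact (mem_liftF g).1 hx
    · intro hc
      refine ⟨Quotient.out c, ?_, ?_⟩
      · have : (QuotientAddGroup.mk (Quotient.out c) : Q) = c := by
          simpa using QuotientAddGroup.out_eq' c
        rw [mem_liftF, this]; exact hc
      · simpa using QuotientAddGroup.out_eq' c

lemma card_fixedBy :
    Nat.card (AddAction.fixedBy {s : Finset (ZMod n) // s.card = q} g) =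
      if addOrderOf g ∣ q then (n / addOrderOf g).choose (q / addOrderOf g) else 0 := by
  classical
  rw [Nat.card_congr (fixEquiv q g)]
  have hd : 0 < addOrderOf g := addOrderOf_pos g
  by_cases h : addOrderOf g ∣ q
  · rw [if_pos h]
    have e : {t : Finset Q // t.card * addOrderOf g = q} ≃
        {t : Finset Q // t.card = q / addOrderOf g} :=
      Equiv.subtypeEquivProp (by
        ext t
        constructor
        · intro ht
          have := Nat.div_eq_of_eq_mul_left hd ht.symm
          omega
        · intro ht
          rw [ht]
          exact Nat.div_mul_cancel h)
    rw [Nat.card_congr e, Nat.card_eq_fintype_card, Fintype.card_finset_len, card_quot]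
  · rw [if_neg h]
    rw [Nat.card_eq_zero]
    left
    rw [isEmpty_subtype]
    intro t ht
    exact h (Dvd.intro_left t.card ht)
end cardfix

theorem necklace_dvd (n q : ℕ) (hn : 0 < n) :
    n ∣ ∑ d ∈ (Nat.gcd n q).divisors, Nat.totient d * Nat.choose (n / d) (q / d) := by
  classical
  haveI : NeZero n := ⟨hn.ne'⟩
  set X := {s : Finset (ZMod n) // s.card = q} with hX
  haveI : ∀ a : ZMod n, Fintype (AddAction.fixedBy X a) := fun a => Fintype.ofFinite _
  haveI : Fintype (AddAction.orbitRel.Quotient (ZMod n) X) := Fintype.ofFinite _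
  have burnside := AddAction.sum_card_fixedBy_eq_card_orbits_mul_card_addGroup (ZMod n) X
  have hcard : Fintype.card (ZMod n) = n := ZMod.card n
  have hstep : ∀ g : ZMod n, Fintype.card (AddAction.fixedBy X g) =
      if addOrderOf g ∣ q then (n / addOrderOf g).choose (q / addOrderOf g) else 0 := by
    intro g
    rw [← Nat.card_eq_fintype_card]
    exact card_fixedBy q g
  rw [Finset.sum_congr rfl (fun g _ => hstep g), hcard] at burnside
  -- regroup by order
  have hmaps : ∀ g : ZMod n, g ∈ (Finset.univ : Finset (ZMod n)) → addOrderOf g ∈ n.divisors := by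
    intro g _
    rw [Nat.mem_divisors]
    refine ⟨?_, hn.ne'⟩
    have := addOrderOf_dvd_card (x := g)
    rwa [hcard] at this
  have regroup := Finset.sum_fiberwise_of_maps_to hmaps
    (fun g : ZMod n => if addOrderOf g ∣ q then (n / addOrderOf g).choose (q / addOrderOf g) else 0)
  rw [← regroup] at burnside
  have hinner : ∀ d ∈ n.divisors,
      (∑ g ∈ Finset.univ.filter fun g : ZMod n => addOrderOf g = d,
        if addOrderOf g ∣ q then (n / addOrderOf g).choose (q / addOrderOf g) else 0)
      = Nat.totient d * (if d ∣ q then (n / d).choose (q / d) else 0) := by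
    intro d hd
    have h1 : ∀ g ∈ Finset.univ.filter fun g : ZMod n => addOrderOf g = d,
        (if addOrderOf g ∣ q then (n / addOrderOf g).choose (q / addOrderOf g) else 0)
        = (if d ∣ q then (n / d).choose (q / d) else 0) := by
      intro g hg
      rw [Finset.mem_filter] at hg
      rw [hg.2]
    rw [Finset.sum_congr rfl h1, Finset.sum_const, smul_eq_mul]
    congr 1
    have := IsAddCyclic.card_addOrderOf_eq_totient (α := ZMod n) (d := d)
      (by rw [hcard]; exact (Nat.mem_divisors.1 hd).1)
    simpa using this
  rw [Finset.sum_congr rfl hinner] at burnside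
  have hsum : ∑ d ∈ n.divisors, Nat.totient d * (if d ∣ q then (n / d).choose (q / d) else 0)
      = ∑ d ∈ (Nat.gcd n q).divisors, Nat.totient d * Nat.choose (n / d) (q / d) := by
    simp only [mul_ite, mul_zero]
    rw [← Finset.sum_filter]
    apply Finset.sum_congr _ (fun _ _ => rfl)
    ext d
    simp only [Finset.mem_filter, Nat.mem_divisors, Nat.dvd_gcd_iff]
    constructor
    · rintro ⟨⟨h1, _⟩, h2⟩; exact ⟨⟨h1, h2⟩, Nat.gcd_ne_zero_left hn.ne'⟩
    · rintro ⟨⟨h1, h2⟩, _⟩; exact ⟨⟨h1, hn.ne'⟩, h2⟩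
  rw [hsum] at burnside
  exact ⟨_, by rw [burnside, mul_comm]⟩


lemma catalan_dvd (p q : ℕ) (hq : 0 < q) (h : Nat.gcd p q = 1) :
    (p + q) ∣ Nat.choose (p + q) q := by
  have key : (p + q) * Nat.choose (p + q - 1) (q - 1) = Nat.choose (p + q) q * q := by
    have := Nat.add_one_mul_choose_eq (p + q - 1) (q - 1)
    have h1 : p + q - 1 + 1 = p + q := by omega
    have h2 : q - 1 + 1 = q := by omega
    rw [h1, h2] at this
    exact this
  have hco : Nat.Coprime (p + q) q := by
    have : Nat.gcd (p + q) q = Nat.gcd p q := Nat.gcd_add_self_left q p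
    rwa [Nat.Coprime, this]
  exact hco.dvd_of_dvd_mul_right ⟨_, key.symm⟩

example : True := trivial

lemma filter_one_lt (m : ℕ) : m.divisors.filter (fun d => 1 < d) = m.divisors.erase 1 := by
  ext d
  simp only [Finset.mem_filter, Finset.mem_erase, Nat.mem_divisors]
  constructor
  · rintro ⟨h1, h2⟩; exact ⟨by omega, h1⟩
  · rintro ⟨h1, h2⟩
    refine ⟨h2, ?_⟩
    have : d ≠ 0 := by rintro rfl; exact h2.2 (zero_dvd_iff.mp h2.1)
    omega

/-- For `p > q ≥ 1` with `gcd(p,q) = 1`, the counting expression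
`(p+q-2)!/(p!q!) + (1/(p+q-1))(∑_{1<d∣gcd(p-1,q)} φ(d) C((p+q-1)/d, q/d)
  + ∑_{1<d∣gcd(p,q-1)} φ(d) C((p+q-1)/d, p/d))` is a positive integer. -/
theorem stmt7 (p q : ℕ) (hq : 1 ≤ q) (hpq : q < p) (h : Nat.gcd p q = 1) :
    ∃ n : ℕ, 0 < n ∧
      (Nat.factorial (p + q - 2) : ℚ) / ((Nat.factorial p : ℚ) * (Nat.factorial q : ℚ))
        + (1 : ℚ) / ((p : ℚ) + (q : ℚ) - 1) *
          ((∑ d ∈ (Nat.gcd (p - 1) q).divisors.filter (fun d => 1 < d),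
              (Nat.totient d : ℚ) * (Nat.choose ((p + q - 1) / d) (q / d) : ℚ))
           + ∑ d ∈ (Nat.gcd p (q - 1)).divisors.filter (fun d => 1 < d),
              (Nat.totient d : ℚ) * (Nat.choose ((p + q - 1) / d) (p / d) : ℚ)) = (n : ℚ) := by
  have hp2 : 2 ≤ p := by omega
  set N : ℕ := p + q - 1 with hN
  have hN2 : 2 ≤ N := by omega
  -- gcd identifications
  have hg1 : Nat.gcd N q = Nat.gcd (p - 1) q := by
    have : N = (p - 1) + q := by omega
    rw [this, Nat.gcd_add_self_left]
  have hg2 : Nat.gcd N p = Nat.gcd p (q - 1) := by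
    have : N = (q - 1) + p := by omega
    rw [this, Nat.gcd_add_self_left, Nat.gcd_comm]
  -- the two full divisor sums
  set T1 : ℕ := ∑ d ∈ (Nat.gcd (p - 1) q).divisors, Nat.totient d * Nat.choose (N / d) (q / d)
    with hT1
  set T2 : ℕ := ∑ d ∈ (Nat.gcd p (q - 1)).divisors, Nat.totient d * Nat.choose (N / d) (p / d)
    with hT2
  have dvd1 : N ∣ T1 := by rw [hT1, ← hg1]; exact necklace_dvd N q (by omega)
  have dvd2 : N ∣ T2 := by rw [hT2, ← hg2]; exact necklace_dvd N p (by omega)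
  have dvd3 : (p + q) ∣ Nat.choose (p + q) q := catalan_dvd p q (by omega) h
  set I1 : ℕ := T1 / N with hI1
  set I2 : ℕ := T2 / N with hI2
  set K : ℕ := Nat.choose (p + q) q / (p + q) with hK
  have eI1 : I1 * N = T1 := Nat.div_mul_cancel dvd1
  have eI2 : I2 * N = T2 := Nat.div_mul_cancel dvd2
  have eK : K * (p + q) = Nat.choose (p + q) q := Nat.div_mul_cancel dvd3
  -- split off the d = 1 term
  set S1 : ℕ := ∑ d ∈ (Nat.gcd (p - 1) q).divisors.filter (fun d => 1 < d),
      Nat.totient d * Nat.choose (N / d) (q / d) with hS1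
  set S2 : ℕ := ∑ d ∈ (Nat.gcd p (q - 1)).divisors.filter (fun d => 1 < d),
      Nat.totient d * Nat.choose (N / d) (p / d) with hS2
  have h1mem1 : (1 : ℕ) ∈ (Nat.gcd (p - 1) q).divisors := by
    rw [Nat.mem_divisors]
    exact ⟨one_dvd _, Nat.gcd_ne_zero_right (by omega)⟩
  have h1mem2 : (1 : ℕ) ∈ (Nat.gcd p (q - 1)).divisors := by
    rw [Nat.mem_divisors]
    exact ⟨one_dvd _, Nat.gcd_ne_zero_left (by omega)⟩
  have eS1 : Nat.choose N q + S1 = T1 := by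
    rw [hS1, filter_one_lt]
    simpa using Finset.add_sum_erase _ (fun d => Nat.totient d * Nat.choose (N / d) (q / d)) h1mem1
  have eS2 : Nat.choose N p + S2 = T2 := by
    rw [hS2, filter_one_lt]
    simpa using Finset.add_sum_erase _ (fun d => Nat.totient d * Nat.choose (N / d) (p / d)) h1mem2
  -- factorial identities
  have n1 : Nat.choose N q * ((p - 1).factorial * q.factorial) = N * (p + q - 2).factorial := by
    have h1 := Nat.choose_mul_factorial_mul_factorial (show q ≤ N by omega)
    have h2 : N - q = p - 1 := by omega
    have h3 : N.factorial = N * (p + q - 2).factorial := by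
      have : N = (p + q - 2) + 1 := by omega
      rw [this, Nat.factorial_succ]
    rw [h2] at h1
    rw [← h3, ← h1]; ring
  have n2 : Nat.choose N p * (p.factorial * (q - 1).factorial) = N * (p + q - 2).factorial := by
    have h1 := Nat.choose_mul_factorial_mul_factorial (show p ≤ N by omega)
    have h2 : N - p = q - 1 := by omega
    have h3 : N.factorial = N * (p + q - 2).factorial := by
      have : N = (p + q - 2) + 1 := by omega
      rw [this, Nat.factorial_succ]
    rw [h2] at h1
    rw [← h3, ← h1]; ring
  have n3 : Nat.choose (p + q) q * (q.factorial * p.factorial) = (p + q) * (N * (p + q - 2).factorial) := by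
    have h1 := Nat.choose_mul_factorial_mul_factorial (show q ≤ p + q by omega)
    have h2 : p + q - q = p := by omega
    have h3 : (p + q).factorial = (p + q) * (N * (p + q - 2).factorial) := by
      have e1 : p + q = N + 1 := by omega
      have e2 : N = (p + q - 2) + 1 := by omega
      calc (p + q).factorial = (N + 1).factorial := by rw [← e1]
        _ = (N + 1) * N.factorial := Nat.factorial_succ N
        _ = (p + q) * (N * (p + q - 2).factorial) := by
            rw [← e1, e2, Nat.factorial_succ, ← e2]
    rw [h2] at h1
    rw [← h3, ← h1]; ring
  -- cast facts
  have hfp : (p.factorial : ℚ) ≠ 0 := Nat.cast_ne_zero.2 (Nat.factorial_ne_zero p)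
  have hfq : (q.factorial : ℚ) ≠ 0 := Nat.cast_ne_zero.2 (Nat.factorial_ne_zero q)
  have hNQ : ((N : ℕ) : ℚ) = (p : ℚ) + (q : ℚ) - 1 := by
    rw [hN]; push_cast [Nat.cast_sub (show 1 ≤ p + q by omega)]; ring
  have hNne : ((N : ℕ) : ℚ) ≠ 0 := Nat.cast_ne_zero.2 (by omega)
  have hNQpos : (0 : ℚ) < (p : ℚ) + q - 1 := by
    rw [← hNQ]; exact_mod_cast (show 0 < N by omega)
  set A : ℚ := ((p + q - 2).factorial : ℚ) / ((p.factorial : ℚ) * q.factorial) with hA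
  have hA0 : 0 < A := by
    rw [hA]
    have h1 : (0:ℚ) < ((p + q - 2).factorial : ℚ) := by exact_mod_cast (p+q-2).factorial_pos
    have h2 : (0:ℚ) < (p.factorial : ℚ) := by exact_mod_cast p.factorial_pos
    have h3 : (0:ℚ) < (q.factorial : ℚ) := by exact_mod_cast q.factorial_pos
    positivity
  -- key rational identities
  have cfp : (p.factorial : ℚ) = p * (p - 1).factorial := by
    exact_mod_cast (Nat.mul_factorial_pred (show p ≠ 0 by omega)).symm
  have cfq : (q.factorial : ℚ) = q * (q - 1).factorial := by
    exact_mod_cast (Nat.mul_factorial_pred (show q ≠ 0 by omega)).symm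
  have cn1 : (Nat.choose N q : ℚ) * (((p-1).factorial : ℚ) * (q.factorial : ℚ))
      = (N : ℚ) * ((p + q - 2).factorial : ℚ) := by exact_mod_cast n1
  have cn2 : (Nat.choose N p : ℚ) * ((p.factorial : ℚ) * ((q-1).factorial : ℚ))
      = (N : ℚ) * ((p + q - 2).factorial : ℚ) := by exact_mod_cast n2
  have cn3 : (Nat.choose (p+q) q : ℚ) * ((q.factorial : ℚ) * (p.factorial : ℚ))
      = ((p:ℚ) + q) * ((N : ℚ) * ((p + q - 2).factorial : ℚ)) := by exact_mod_cast n3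
  have dCq : (Nat.choose N q : ℚ) = (N : ℚ) * p * A := by
    rw [hA]
    field_simp
    linear_combination (Nat.choose N q : ℚ) * (q.factorial : ℚ) * cfp + (p:ℚ) * cn1
  have dCp : (Nat.choose N p : ℚ) = (N : ℚ) * q * A := by
    rw [hA]
    field_simp
    linear_combination (Nat.choose N p : ℚ) * (p.factorial : ℚ) * cfq + (q:ℚ) * cn2
  have cK : (K : ℚ) * ((p:ℚ) + q) = (Nat.choose (p+q) q : ℚ) := by exact_mod_cast eK
  have hpqne : ((p:ℚ) + q) ≠ 0 := by positivity
  have dK : (K : ℚ) = (N : ℚ) * A := by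
    rw [hA]
    field_simp
    have key : ((p:ℚ)+q) * ((K:ℚ) * ((p.factorial : ℚ) * (q.factorial : ℚ)))
        = ((p:ℚ)+q) * ((N:ℚ) * ((p + q - 2).factorial : ℚ)) := by
      linear_combination ((p.factorial : ℚ) * (q.factorial : ℚ)) * cK + cn3
    exact mul_left_cancel₀ hpqne (by linear_combination key)
  have cS1 : (Nat.choose N q : ℚ) + (S1 : ℚ) = (I1 : ℚ) * N := by
    rw [show ((I1:ℚ) * N) = ((I1 * N : ℕ) : ℚ) by push_cast; ring, eI1]
    exact_mod_cast eS1
  have cS2 : (Nat.choose N p : ℚ) + (S2 : ℚ) = (I2 : ℚ) * N := by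
    rw [show ((I2:ℚ) * N) = ((I2 * N : ℕ) : ℚ) by push_cast; ring, eI2]
    exact_mod_cast eS2
  have dS1 : (S1 : ℚ) = (I1 : ℚ) * N - (N : ℚ) * p * A := by rw [← dCq]; linarith [cS1]
  have dS2 : (S2 : ℚ) = (I2 : ℚ) * N - (N : ℚ) * q * A := by rw [← dCp]; linarith [cS2]
  -- identify statement sums with S1, S2
  have sum1 : (∑ d ∈ (Nat.gcd (p - 1) q).divisors.filter (fun d => 1 < d),
      (Nat.totient d : ℚ) * (Nat.choose ((p + q - 1) / d) (q / d) : ℚ)) = (S1 : ℚ) := by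
    rw [hS1, ← hN]; push_cast; rfl
  have sum2 : (∑ d ∈ (Nat.gcd p (q - 1)).divisors.filter (fun d => 1 < d),
      (Nat.totient d : ℚ) * (Nat.choose ((p + q - 1) / d) (p / d) : ℚ)) = (S2 : ℚ) := by
    rw [hS2, ← hN]; push_cast; rfl
  -- the main equality
  have hEq : ((p + q - 2).factorial : ℚ) / ((p.factorial : ℚ) * q.factorial)
      + (1 : ℚ) / ((p : ℚ) + (q : ℚ) - 1) * ((S1 : ℚ) + (S2 : ℚ))
      = (I1 : ℚ) + (I2 : ℚ) - (K : ℚ) := by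
    rw [← hA, dS1, dS2, dK, hNQ]
    field_simp
    ring
  -- positivity
  have hpos : (0:ℚ) < (I1 : ℚ) + (I2 : ℚ) - (K : ℚ) := by
    rw [← hEq, ← hA]
    have hs1 : (0:ℚ) ≤ (S1 : ℚ) := Nat.cast_nonneg _
    have hs2 : (0:ℚ) ≤ (S2 : ℚ) := Nat.cast_nonneg _
    have : (0:ℚ) ≤ (1 : ℚ) / ((p : ℚ) + (q : ℚ) - 1) * ((S1 : ℚ) + (S2 : ℚ)) := by positivity
    linarith
  have hKlt : K < I1 + I2 := by
    have : (K : ℚ) < ((I1 + I2 : ℕ) : ℚ) := by push_cast; linarith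
    exact_mod_cast this
  refine ⟨I1 + I2 - K, by omega, ?_⟩
  rw [sum1, sum2, hEq]
  push_cast [Nat.cast_sub hKlt.le]
  ring
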